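/- Let n > m ≥ 1 and d ≥ 1 be integers. In ℝ^{n+m-1} with coordinates (u_2,…,u_n, v_1,…,v_m), let P_i = d·e_{u_i} (2 ≤ i ≤ n), Q_j = d·e_{v_j} (1 ≤ j ≤ m), and R = (−d,…,−d, d,…,d) (entry −d in each u-coordinate and d in each v-coordinate). Then the cone ℝ_{≥0}·Δ generated by the convex hull Δ of {0, P_i, Q_j, R} is exactly the set of points satisfying u_i + v_j ≥ 0 for all i, j and v_j ≥ 0 for all j. -/

import Mathlib

open Sum

/-- The vertex `P_i = d·e_{u_i}` of the Newton polytope of `f_a`. -/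
def Ppt (n m d : ℕ) (i : Fin (n - 1)) : Fin (n - 1) ⊕ Fin m → ℝ :=
  fun k => if k = Sum.inl i then (d : ℝ) else 0

/-- The vertex `Q_j = d·e_{v_j}` of the Newton polytope of `f_a`. -/
def Qpt (n m d : ℕ) (j : Fin m) : Fin (n - 1) ⊕ Fin m → ℝ :=
  fun k => if k = Sum.inr j then (d : ℝ) else 0

/-- The vertex `R` (all `u`-coordinates `-d`, all `v`-coordinates `d`). -/
def Rpt (n m d : ℕ) : Fin (n - 1) ⊕ Fin m → ℝ :=
  Sum.elim (fun _ => -(d : ℝ)) (fun _ => (d : ℝ))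

/-- The Newton polytope `Δ(f_a)`: convex hull of `0`, the `P_i`, the `Q_j` and `R`. -/
def NPolytope (n m d : ℕ) : Set (Fin (n - 1) ⊕ Fin m → ℝ) :=
  convexHull ℝ
    (insert 0 (insert (Rpt n m d) (Set.range (Ppt n m d) ∪ Set.range (Qpt n m d))))

/-- for `n > m ≥ 1`, `d ≥ 1`, the cone `ℝ_{≥0}·Δ` over the Newton polytope is
exactly `{x | u_i + v_j ≥ 0 for all i,j, and v_j ≥ 0 for all j}`. -/
theorem stmt2 (n m d : ℕ) (hm : 1 ≤ m) (hnm : m < n) (hd : 1 ≤ d) :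
    {x : Fin (n - 1) ⊕ Fin m → ℝ | ∃ c : ℝ, 0 ≤ c ∧ ∃ y ∈ NPolytope n m d, x = c • y}
      = {x : Fin (n - 1) ⊕ Fin m → ℝ |
          (∀ i j, 0 ≤ x (inl i) + x (inr j)) ∧ ∀ j, 0 ≤ x (inr j)} := by
  have hn1 : 0 < n - 1 := by omega
  have hd0 : (0 : ℝ) < d := by exact_mod_cast hd
  haveI : Nonempty (Fin (n - 1)) := ⟨⟨0, hn1⟩⟩
  ext x
  simp only [Set.mem_setOf_eq]
  constructor
  · rintro ⟨c, hc, y, hy, rfl⟩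
    set G : Set (Fin (n - 1) ⊕ Fin m → ℝ) :=
      {z | (∀ i j, 0 ≤ z (inl i) + z (inr j)) ∧ ∀ j, 0 ≤ z (inr j)} with hG
    have hconv : Convex ℝ G := by
      rintro z hz w hw a b ha hb hab
      refine ⟨fun i j => ?_, fun j => ?_⟩
      · have := hz.1 i j; have := hw.1 i j
        simp only [Pi.add_apply, Pi.smul_apply, smul_eq_mul]
        nlinarith
      · have := hz.2 j; have := hw.2 j
        simp only [Pi.add_apply, Pi.smul_apply, smul_eq_mul]
        nlinarith
    have hsub : (insert 0 (insert (Rpt n m d)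
        (Set.range (Ppt n m d) ∪ Set.range (Qpt n m d)))) ⊆ G := by
      rintro z hz
      simp only [Set.mem_insert_iff, Set.mem_union, Set.mem_range] at hz
      rcases hz with rfl | rfl | ⟨i, rfl⟩ | ⟨j, rfl⟩
      · exact ⟨fun i j => by simp, fun j => by simp⟩
      · exact ⟨fun i j => by simp [Rpt], fun j => by simp [Rpt, hd0.le]⟩
      · refine ⟨fun i' j => ?_, fun j => ?_⟩ <;>
          simp [Ppt] <;> split <;> simp [hd0.le]
      · refine ⟨fun i' j' => ?_, fun j' => ?_⟩ <;>
          simp [Qpt] <;> split <;> simp [hd0.le]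
    have hyG : y ∈ G := convexHull_min hsub hconv hy
    refine ⟨fun i j => ?_, fun j => ?_⟩
    · have := hyG.1 i j
      simp only [Pi.smul_apply, smul_eq_mul]
      nlinarith
    · have := hyG.2 j
      simp only [Pi.smul_apply, smul_eq_mul]
      nlinarith
  · rintro ⟨h1, h2⟩
    set c : ℝ := max 0 (Finset.univ.sup' Finset.univ_nonempty
      (fun i : Fin (n - 1) => -x (inl i) / d)) with hc_def
    have hc0 : 0 ≤ c := le_max_left _ _
    have hca : ∀ i, -x (inl i) / d ≤ c := fun i =>
      le_trans (Finset.le_sup' (fun i : Fin (n - 1) => -x (inl i) / d)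
        (Finset.mem_univ i)) (le_max_right _ _)
    have hcb : ∀ j, c ≤ x (inr j) / d := by
      intro j
      refine max_le (div_nonneg (h2 j) hd0.le) (Finset.sup'_le _ _ fun i _ => ?_)
      have := h1 i j
      rw [div_le_div_iff₀ hd0 hd0]
      nlinarith
    set a : Fin (n - 1) → ℝ := fun i => x (inl i) / d + c with ha_def
    set b : Fin m → ℝ := fun j => x (inr j) / d - c with hb_def
    have ha0 : ∀ i, 0 ≤ a i := fun i => by
      have h := hca i
      rw [neg_div] at h
      simp only [ha_def]
      linarith
    have hb0 : ∀ j, 0 ≤ b j := fun j => by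
      have := hcb j
      simp only [hb_def]
      linarith
    have hx : x = (∑ i, a i • Ppt n m d i) + (∑ j, b j • Qpt n m d j)
        + c • Rpt n m d := by
      funext k
      simp only [Pi.add_apply, Finset.sum_apply, Pi.smul_apply, smul_eq_mul]
      cases k with
      | inl i =>
        rw [Finset.sum_eq_single i (fun i' _ hne => by
              simp [Ppt, (Sum.inl_injective.ne_iff).mpr (Ne.symm hne)])
            (fun h => absurd (Finset.mem_univ i) h)]
        simp only [Ppt, if_pos rfl, Rpt, Sum.elim_inl]
        rw [Finset.sum_eq_zero (fun j _ => by simp [Qpt])]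
        simp only [ha_def]
        field_simp
        simp only [↓reduceIte]
        ring
      | inr j =>
        rw [Finset.sum_eq_zero (fun i _ => by simp [Ppt])]
        rw [Finset.sum_eq_single j (fun j' _ hne => by
              simp [Qpt, (Sum.inr_injective.ne_iff).mpr (Ne.symm hne)])
            (fun h => absurd (Finset.mem_univ j) h)]
        simp only [Qpt, if_pos rfl, Rpt, Sum.elim_inr]
        simp only [hb_def]
        field_simp
        simp only [↓reduceIte]
        ring
    set s : ℝ := (∑ i, a i) + (∑ j, b j) + c with hs_def
    have hs0 : 0 ≤ s := by
      have h1' : 0 ≤ ∑ i, a i := Finset.sum_nonneg fun i _ => ha0 i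
      have h2' : 0 ≤ ∑ j, b j := Finset.sum_nonneg fun j _ => hb0 j
      linarith
    rcases eq_or_lt_of_le hs0 with hs | hs
    · -- all weights vanish, so x = 0
      have h1' : 0 ≤ ∑ i, a i := Finset.sum_nonneg fun i _ => ha0 i
      have h2' : 0 ≤ ∑ j, b j := Finset.sum_nonneg fun j _ => hb0 j
      have hc' : c = 0 := by linarith
      have hA : ∑ i, a i = 0 := by linarith
      have hB : ∑ j, b j = 0 := by linarith
      have hai : ∀ i, a i = 0 := fun i =>
        (Finset.sum_eq_zero_iff_of_nonneg (fun i _ => ha0 i)).mp hA i (Finset.mem_univ i)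
      have hbj : ∀ j, b j = 0 := fun j =>
        (Finset.sum_eq_zero_iff_of_nonneg (fun j _ => hb0 j)).mp hB j (Finset.mem_univ j)
      refine ⟨0, le_refl 0, 0, subset_convexHull ℝ _ (Set.mem_insert _ _), ?_⟩
      rw [smul_zero]
      funext k
      cases k with
      | inl i =>
        have h := hai i
        simp only [ha_def, hc', add_zero] at h
        exact (div_eq_zero_iff.mp h).resolve_right (ne_of_gt hd0)
      | inr j =>
        have h := hbj j
        simp only [hb_def, hc', sub_zero] at h
        exact (div_eq_zero_iff.mp h).resolve_right (ne_of_gt hd0)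
    · -- s > 0 : write x as s • centerMass
      set w : (Fin (n - 1) ⊕ Fin m) ⊕ Unit → ℝ :=
        Sum.elim (Sum.elim a b) (fun _ => c) with hw_def
      set z : (Fin (n - 1) ⊕ Fin m) ⊕ Unit → (Fin (n - 1) ⊕ Fin m → ℝ) :=
        Sum.elim (Sum.elim (Ppt n m d) (Qpt n m d)) (fun _ => Rpt n m d) with hz_def
      have hwsum : ∑ k, w k = s := by
        rw [Fintype.sum_sum_type, Fintype.sum_sum_type]
        simp [hw_def, hs_def]
      have hw0 : ∀ k ∈ Finset.univ, 0 ≤ w k := by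
        rintro ((i | j) | ⟨⟩) -
        · exact ha0 _
        · exact hb0 _
        · exact hc0
      have hzmem : ∀ k ∈ Finset.univ, z k ∈
          (insert 0 (insert (Rpt n m d)
            (Set.range (Ppt n m d) ∪ Set.range (Qpt n m d)))) := by
        rintro ((i | j) | ⟨⟩) -
        · exact Set.mem_insert_iff.mpr (Or.inr (Set.mem_insert_iff.mpr
            (Or.inr (Or.inl ⟨_, rfl⟩))))
        · exact Set.mem_insert_iff.mpr (Or.inr (Set.mem_insert_iff.mpr
            (Or.inr (Or.inr ⟨_, rfl⟩))))
        · exact Set.mem_insert_iff.mpr (Or.inr (Set.mem_insert_iff.mpr (Or.inl rfl)))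
      refine ⟨s, hs0, Finset.univ.centerMass w z,
        Finset.centerMass_mem_convexHull _ hw0 (by rw [hwsum]; exact hs) hzmem, ?_⟩
      rw [Finset.centerMass, hwsum, smul_smul, mul_inv_cancel₀ (ne_of_gt hs), one_smul]
      rw [hx]
      rw [Fintype.sum_sum_type, Fintype.sum_sum_type]
      simp [hw_def, hz_def]
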